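/- Let f : ℝ^d → ℝ be convex differentiable. With ψ_k, x_k, A_k as in the estimate sequence, for any x, z_k, y_{k+1}: ψ_{k+1}(x) − A_{k+1} f(y_{k+1}) − (ψ_k(x_k) − A_k f(z_k)) ≥ A_{k+1} ⟨∇f(y_{k+1}), (a_{k+1}/A_{k+1}) x + (A_k/A_{k+1}) z_k − y_{k+1}⟩ + ‖x − x_k‖²/2. -/

import Mathlib

open scoped RealInnerProductSpace

lemma grad_ineq {E : Type*} [NormedAddCommGroup E] [InnerProductSpace ℝ E] [CompleteSpace E]
    (f : E → ℝ) (hconv : ConvexOn ℝ Set.univ f) (hdiff : Differentiable ℝ f)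
    (yy z : E) : f yy + ⟪gradient f yy, z - yy⟫ ≤ f z := by
  set g : ℝ → ℝ := fun t => f (yy + t • (z - yy)) with hg
  have hgc : ConvexOn ℝ Set.univ g := by
    have h := hconv.comp_affineMap (AffineMap.lineMap yy z : ℝ →ᵃ[ℝ] E)
    have he : (f ∘ (AffineMap.lineMap yy z : ℝ →ᵃ[ℝ] E)) = g := by
      funext t
      simp [g, AffineMap.lineMap_apply, vsub_eq_sub, vadd_eq_add, add_comm]
    rw [he] at h
    simpa using h
  have hu : HasDerivAt (fun t : ℝ => yy + t • (z - yy)) (z - yy) 0 := by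
    simpa using ((hasDerivAt_id (0:ℝ)).smul_const (z - yy)).const_add yy
  have hF : HasFDerivAt f (InnerProductSpace.toDual ℝ E (gradient f yy))
      (yy + (0:ℝ) • (z - yy)) := by
    simpa using (hdiff yy).hasGradientAt.hasFDerivAt
  have hgd : HasDerivAt g ⟪gradient f yy, z - yy⟫ 0 := by
    have := hF.comp_hasDerivAt 0 hu
    simpa [InnerProductSpace.toDual_apply_apply, g, Function.comp_def] using this
  have := hgc.le_slope_of_hasDerivAt (Set.mem_univ 0) (Set.mem_univ 1) one_pos hgd
  have hs : slope g 0 1 = f z - f yy := by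
    simp [slope, g]
  linarith [this.trans_eq hs]

/-- The key induction step for the estimate sequence. -/
theorem estimate_sequence_induction_step (d : ℕ) (f : EuclideanSpace ℝ (Fin d) → ℝ)
    (hconv : ConvexOn ℝ Set.univ f) (hdiff : Differentiable ℝ f)
    (a : ℕ → ℝ) (ha : ∀ i, 1 ≤ i → 0 < a i) (y : ℕ → EuclideanSpace ℝ (Fin d))
    (A : ℕ → ℝ) (hA : ∀ n, A n = ∑ i ∈ Finset.Icc 1 n, a i)
    (ψ : ℕ → EuclideanSpace ℝ (Fin d) → ℝ)
    (hψ : ∀ n x, ψ n x = ‖x‖ ^ 2 / 2 +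
      ∑ i ∈ Finset.Icc 1 n, a i * (f (y i) + ⟪gradient f (y i), x - y i⟫))
    (xk : ℕ → EuclideanSpace ℝ (Fin d))
    (hxk : ∀ n, xk n = -∑ i ∈ Finset.Icc 1 n, a i • gradient f (y i))
    (k : ℕ) (zk : EuclideanSpace ℝ (Fin d)) :
    ∀ x : EuclideanSpace ℝ (Fin d),
      ψ (k + 1) x - A (k + 1) * f (y (k + 1)) - (ψ k (xk k) - A k * f zk) ≥
        A (k + 1) * ⟪gradient f (y (k + 1)),
            (a (k + 1) / A (k + 1)) • x + (A k / A (k + 1)) • zk - y (k + 1)⟫ +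
          ‖x - xk k‖ ^ 2 / 2 := by
  intro x
  set g := gradient f (y (k + 1)) with hgdef
  -- A (k+1) = A k + a (k+1)
  have hA1 : A (k + 1) = A k + a (k + 1) := by
    rw [hA, hA, Finset.sum_Icc_succ_top (Nat.le_add_left 1 k)]
  have hApos : 0 < A (k + 1) := by
    rw [hA]
    apply Finset.sum_pos
    · intro i hi
      exact ha i (Finset.mem_Icc.mp hi).1
    · exact ⟨1, Finset.mem_Icc.mpr ⟨le_refl 1, Nat.le_add_left 1 k⟩⟩
  have hAk : 0 ≤ A k := by
    rw [hA]
    exact Finset.sum_nonneg fun i hi => (ha i (Finset.mem_Icc.mp hi).1).le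
  -- ψ (k+1) x = ψ k x + a (k+1) * (...)
  have hψ1 : ψ (k + 1) x = ψ k x + a (k + 1) * (f (y (k + 1)) + ⟪g, x - y (k + 1)⟫) := by
    rw [hψ, hψ, Finset.sum_Icc_succ_top (Nat.le_add_left 1 k)]
    ring
  -- quadratic identity: ψ k x = ψ k (xk k) + ‖x - xk k‖²/2
  have hsum : ∀ w : EuclideanSpace ℝ (Fin d),
      ∑ i ∈ Finset.Icc 1 k, a i * ⟪gradient f (y i), w⟫ = ⟪-xk k, w⟫ := by
    intro w
    rw [hxk, neg_neg, sum_inner]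
    exact Finset.sum_congr rfl fun i _ => (real_inner_smul_left _ _ _).symm
  have hquad : ψ k x = ψ k (xk k) + ‖x - xk k‖ ^ 2 / 2 := by
    have e1 : ∀ w : EuclideanSpace ℝ (Fin d), ψ k w = ‖w‖ ^ 2 / 2 +
        (∑ i ∈ Finset.Icc 1 k, a i * (f (y i) - ⟪gradient f (y i), y i⟫) + ⟪-xk k, w⟫) := by
      intro w
      rw [hψ, ← hsum w, ← Finset.sum_add_distrib]
      congr 1
      refine Finset.sum_congr rfl fun i _ => ?_
      rw [inner_sub_right]
      ring
    rw [e1 x, e1 (xk k)]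
    have e2 : ‖x - xk k‖ ^ 2 = ‖x‖ ^ 2 - 2 * ⟪x, xk k⟫ + ‖xk k‖ ^ 2 :=
      norm_sub_sq_real x (xk k)
    have e3 : ⟪-xk k, x⟫ = -⟪x, xk k⟫ := by
      rw [inner_neg_left, real_inner_comm]
    have e4 : ⟪-xk k, xk k⟫ = -‖xk k‖ ^ 2 := by
      rw [inner_neg_left, real_inner_self_eq_norm_sq]
    rw [e3, e4]
    linarith
  -- expand the RHS inner product
  have hrhs : A (k + 1) * ⟪g, (a (k + 1) / A (k + 1)) • x + (A k / A (k + 1)) • zk - y (k + 1)⟫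
      = a (k + 1) * ⟪g, x⟫ + A k * ⟪g, zk⟫ - A (k + 1) * ⟪g, y (k + 1)⟫ := by
    rw [inner_sub_right, inner_add_right, real_inner_smul_right, real_inner_smul_right]
    field_simp
  -- convexity inequality
  have hcz : f (y (k + 1)) + ⟪g, zk - y (k + 1)⟫ ≤ f zk := grad_ineq f hconv hdiff _ _
  have hx1 : ⟪g, x - y (k + 1)⟫ = ⟪g, x⟫ - ⟪g, y (k + 1)⟫ := inner_sub_right _ _ _
  have hz1 : ⟪g, zk - y (k + 1)⟫ = ⟪g, zk⟫ - ⟪g, y (k + 1)⟫ := inner_sub_right _ _ _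
  rw [hz1] at hcz
  rw [hx1] at hψ1
  rw [ge_iff_le, hrhs, hψ1, hquad, hA1]
  nlinarith [mul_le_mul_of_nonneg_left hcz hAk]
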